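/- Let α be a partial action of a finite group G on a unital ring R. Then R has right Krull dimension if and only if R*_α G has right Krull dimension, and in that case Kdim(R) = Kdim(R*_α G). -/

import Mathlib

/-- A unital (untwisted) partial action of a group `G` on a unital ring `R`:
the domain `D g` is the ideal generated by the central idempotent `e g`
(`D g = {x | e g * x = x}`), and `act g` is the ring isomorphism
`α_g : D g⁻¹ → D g` (values outside `D g⁻¹` are irrelevant). -/
structure PartialAction (G : Type) [Group G] (R : Type) [Ring R] where
  e : G → R
  idem : ∀ g, e g * e g = e g
  central : ∀ g r, e g * r = r * e g
  e_one : e 1 = 1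
  act : G → R → R
  act_mem : ∀ g x, e g⁻¹ * x = x → e g * act g x = act g x
  act_add : ∀ g x y, e g⁻¹ * x = x → e g⁻¹ * y = y →
    act g (x + y) = act g x + act g y
  act_mul : ∀ g x y, e g⁻¹ * x = x → e g⁻¹ * y = y →
    act g (x * y) = act g x * act g y
  act_one : ∀ x, act 1 x = x
  inv_act : ∀ g x, e g⁻¹ * x = x → act g⁻¹ (act g x) = x
  -- α_g(D_{g⁻¹} ∩ D_h) = D_g ∩ D_{gh}
  act_range : ∀ g h x, e g⁻¹ * x = x → e h * x = x → e (g * h) * act g x = act g x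
  act_range' : ∀ g h y, e g * y = y → e (g * h) * y = y →
    ∃ x, e g⁻¹ * x = x ∧ e h * x = x ∧ act g x = y
  -- α_g ∘ α_h = α_{gh} on α_{h⁻¹}(D_h ∩ D_{g⁻¹})
  comp : ∀ g h a, e h⁻¹ * a = a → e (h⁻¹ * g⁻¹) * a = a →
    act g (act h a) = act (g * h) a

/-- A realization of the partial skew group ring `R *_α G`:  a ring `A` with
maps `δ g : D g → A` such that `A = ⊕_{g ∈ G} D g δ_g` with multiplication
`(a δ_g)(b δ_h) = α_g(α_{g⁻¹}(a) b) δ_{gh}`. -/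
structure IsPartialSkewGroupRing {G R : Type} [Group G] [Ring R]
    (pa : PartialAction G R) (A : Type) [Ring A] (δ : G → R → A) : Prop where
  proj : ∀ g a, δ g a = δ g (pa.e g * a)
  add : ∀ g a b, δ g (a + b) = δ g a + δ g b
  mul : ∀ g h a b, pa.e g * a = a → pa.e h * b = b →
    δ g a * δ h b = δ (g * h) (pa.act g (pa.act g⁻¹ a * b))
  one : δ 1 1 = 1
  indep : ∀ (s : Finset G) (a : G → R), (∀ g, pa.e g * a g = a g) →
    (∑ g ∈ s, δ g (a g)) = 0 → ∀ g ∈ s, a g = 0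
  span : ∀ x : A, ∃ (s : Finset G) (a : G → R),
    (∀ g, pa.e g * a g = a g) ∧ x = ∑ g ∈ s, δ g (a g)
/-- `DeviationLE o α` says that the deviation of the poset `α` (in the sense of
Gabriel–Rentschler) is at most the ordinal `o`:  in every descending chain
`f 0 ≥ f 1 ≥ …`, for all but finitely many `n` the factor interval
`[f (n+1), f n]` is either trivial or has deviation `≤ o'` for some `o' < o`. -/
def DeviationLE (o : Ordinal.{0}) (α : Type) [Preorder α] : Prop :=
  ∀ f : ℕ → α, (∀ n, f (n + 1) ≤ f n) →
    ∃ N : ℕ, ∀ n ≥ N, f n ≤ f (n + 1) ∨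
      ∃ (o' : Ordinal.{0}) (_ : o' < o),
        DeviationLE o' (Set.Icc (f (n + 1)) (f n))
termination_by o

/-- A module `M` has Krull dimension when the lattice of its submodules has
(ordinal-valued) deviation. -/
def HasKrullDimModule (R M : Type) [Ring R] [AddCommGroup M] [Module R M] : Prop :=
  ∃ o : Ordinal.{0}, DeviationLE o (Submodule R M)

/-- A ring has right Krull dimension when the lattice of its right ideals,
i.e. of left ideals of the opposite ring, has deviation. -/
def HasRightKrullDim (A : Type) [Ring A] : Prop :=
  ∃ o : Ordinal.{0}, DeviationLE o (Submodule Aᵐᵒᵖ Aᵐᵒᵖ)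

/-- `Kdim A ≤ Kdim B` (for the right Krull dimensions):  every ordinal bounding
the deviation of the right ideal lattice of `B` also bounds that of `A`. -/
def RightKrullDimLE (A B : Type) [Ring A] [Ring B] : Prop :=
  ∀ o : Ordinal.{0}, DeviationLE o (Submodule Bᵐᵒᵖ Bᵐᵒᵖ) →
    DeviationLE o (Submodule Aᵐᵒᵖ Aᵐᵒᵖ)



theorem DeviationLE_iff (o : Ordinal.{0}) (α : Type) [Preorder α] :
    DeviationLE o α ↔ ∀ f : ℕ → α, (∀ n, f (n + 1) ≤ f n) →
    ∃ N : ℕ, ∀ n ≥ N, f n ≤ f (n + 1) ∨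
      ∃ (o' : Ordinal.{0}) (_ : o' < o),
        DeviationLE o' (Set.Icc (f (n + 1)) (f n)) := by
  rw [DeviationLE]

theorem DeviationLE.trivial {o : Ordinal.{0}} {α : Type} [Preorder α]
    (h : ∀ x y : α, x ≤ y) : DeviationLE o α := by
  rw [DeviationLE_iff]
  exact fun f _ => ⟨0, fun n _ => Or.inl (h _ _)⟩

theorem DeviationLE.mono {o o₂ : Ordinal.{0}} {α : Type} [Preorder α]
    (hle : o ≤ o₂) (h : DeviationLE o α) : DeviationLE o₂ α := by
  rw [DeviationLE_iff] at h ⊢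
  intro f hf
  obtain ⟨N, hN⟩ := h f hf
  refine ⟨N, fun n hn => ?_⟩
  rcases hN n hn with h1 | ⟨o', ho', hd⟩
  · exact Or.inl h1
  · exact Or.inr ⟨o', lt_of_lt_of_le ho' hle, hd⟩

/-- Transfer of deviation bounds along a monotone map that reflects the order
on comparable pairs. -/
theorem DeviationLE.transfer : ∀ (o : Ordinal.{0}) {α β : Type} [Preorder α] [Preorder β]
    (F : α → β), Monotone F → (∀ a b : α, a ≤ b → F b ≤ F a → b ≤ a) →
    DeviationLE o β → DeviationLE o α := by
  intro o
  induction o using Ordinal.induction with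
  | h o IH =>
  intro α β _ _ F hmono hrefl hβ
  rw [DeviationLE_iff] at hβ ⊢
  intro f hf
  obtain ⟨N, hN⟩ := hβ (fun n => F (f n)) (fun n => hmono (hf n))
  refine ⟨N, fun n hn => ?_⟩
  rcases hN n hn with h1 | ⟨o', ho', hd⟩
  · exact Or.inl (hrefl _ _ (hf n) h1)
  · refine Or.inr ⟨o', ho', ?_⟩
    refine IH o' ho' (fun x : Set.Icc (f (n+1)) (f n) =>
      (⟨F x.1, hmono x.2.1, hmono x.2.2⟩ : Set.Icc (F (f (n+1))) (F (f n))))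
      (fun x y hxy => hmono hxy) ?_ hd
    intro a b hab hba
    exact hrefl a.1 b.1 hab hba

/-- Deviation bound for finite products. -/
theorem DeviationLE.pi : ∀ (o : Ordinal.{0}) {ι : Type} [Fintype ι]
    {β : ι → Type} [∀ i, Preorder (β i)],
    (∀ i, DeviationLE o (β i)) → DeviationLE o (∀ i, β i) := by
  intro o
  induction o using Ordinal.induction with
  | h o IH =>
  intro ι _ β _ hβ
  rw [DeviationLE_iff]
  intro f hf
  have hchain : ∀ i, ∀ n, f (n+1) i ≤ f n i := fun i n => hf n i
  choose N hN using fun i => (DeviationLE_iff o (β i)).mp (hβ i) (fun n => f n i) (hchain i)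
  refine ⟨(Finset.univ : Finset ι).sup N, fun n hn => ?_⟩
  by_cases hall : ∀ i, f n i ≤ f (n+1) i
  · exact Or.inl hall
  · -- some component drops; build ordinal bound for products of intervals
    have hcases : ∀ i, f n i ≤ f (n+1) i ∨
        ∃ (o' : Ordinal.{0}) (_ : o' < o), DeviationLE o' (Set.Icc (f (n+1) i) (f n i)) := by
      intro i
      exact hN i n (le_trans (Finset.le_sup (Finset.mem_univ i)) hn)
    have hbound : ∀ i, ∃ o' : Ordinal.{0}, (o' < o ∨ o' = 0) ∧
        DeviationLE o' (Set.Icc (f (n+1) i) (f n i)) := by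
      intro i
      rcases hcases i with h1 | ⟨o', ho', hd⟩
      · refine ⟨0, Or.inr rfl, DeviationLE.trivial ?_⟩
        intro x y
        show (x : β i) ≤ (y : β i)
        exact le_trans x.2.2 (le_trans h1 y.2.1)
      · exact ⟨o', Or.inl ho', hd⟩
    choose ob hob hdev using hbound
    obtain ⟨i₀, hi₀⟩ := not_forall.mp hall
    have ho0 : (0 : Ordinal) < o := by
      rcases hcases i₀ with h1 | ⟨o', ho', _⟩
      · exact absurd h1 hi₀
      · exact lt_of_le_of_lt (zero_le (a := o')) ho'
    set o' : Ordinal := (Finset.univ : Finset ι).sup ob with ho'def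
    have ho' : o' < o := by
      apply Finset.sup_lt_iff (show ⊥ < o from ho0) |>.mpr
      intro i _
      rcases hob i with h | h
      · exact h
      · simpa [h] using ho0
    refine Or.inr ⟨o', ho', ?_⟩
    -- transfer from the product of intervals
    have hprod : DeviationLE o' (∀ i, Set.Icc (f (n+1) i) (f n i)) := by
      refine IH o' ho' (fun i => DeviationLE.mono ?_ (hdev i))
      exact Finset.le_sup (Finset.mem_univ i)
    refine DeviationLE.transfer o' (fun x : Set.Icc (f (n+1)) (f n) =>
      (fun i => ⟨x.1 i, x.2.1 i, x.2.2 i⟩)) ?_ ?_ hprod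
    · intro x y hxy i
      exact hxy i
    · intro a b hab hba
      intro i
      exact hba i


namespace PSGR

variable {G R : Type} [Group G] [Ring R] {pa : PartialAction G R}
variable {A : Type} [Ring A] {δ : G → R → A}
variable [DecidableEq G]

theorem act_inv_e (pa : PartialAction G R) (g : G) :
    pa.act g⁻¹ (pa.e g) = pa.e g⁻¹ := by
  set u := pa.act g⁻¹ (pa.e g) with hu
  have h1 : pa.e g⁻¹ * u = u := pa.act_mem g⁻¹ (pa.e g) (by rw [inv_inv]; exact pa.idem g)
  have hleft : ∀ x, pa.e g⁻¹ * x = x → u * x = x := by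
    intro x hx
    have h2 : pa.e g * pa.act g x = pa.act g x := pa.act_mem g x hx
    calc u * x = pa.act g⁻¹ (pa.e g) * pa.act g⁻¹ (pa.act g x) := by rw [pa.inv_act g x hx]
    _ = pa.act g⁻¹ (pa.e g * pa.act g x) := by
        rw [pa.act_mul g⁻¹ (pa.e g) (pa.act g x) (by rw [inv_inv]; exact pa.idem g)
          (by rw [inv_inv]; exact h2)]
    _ = pa.act g⁻¹ (pa.act g x) := by rw [h2]
    _ = x := pa.inv_act g x hx
  calc u = pa.e g⁻¹ * u := h1.symm
  _ = u * pa.e g⁻¹ := pa.central g⁻¹ u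
  _ = pa.e g⁻¹ := hleft (pa.e g⁻¹) (pa.idem g⁻¹)

theorem delta_zero (hcp : IsPartialSkewGroupRing pa A δ) (g : G) : δ g 0 = 0 := by
  have h := hcp.add g 0 0
  rw [add_zero] at h
  exact right_eq_add.mp h

theorem delta_neg (hcp : IsPartialSkewGroupRing pa A δ) (g : G) (a : R) :
    δ g (-a) = - δ g a := by
  have h := hcp.add g a (-a)
  rw [add_neg_cancel, delta_zero hcp] at h
  exact (neg_eq_of_add_eq_zero_right h.symm).symm

theorem mul_formula (hcp : IsPartialSkewGroupRing pa A δ) (g h : G) (a b : R)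
    (ha : pa.e g * a = a) (hb : pa.e h * b = b) :
    δ g a * δ h b = δ (g * h) (pa.e (g * h) * (a * pa.act g (pa.e g⁻¹ * b))) := by
  have hainv : pa.e g⁻¹ * pa.act g⁻¹ a = pa.act g⁻¹ a :=
    pa.act_mem g⁻¹ a (by rw [inv_inv]; exact ha)
  have key : pa.act g⁻¹ a * b = pa.act g⁻¹ a * (pa.e g⁻¹ * b) := by
    conv_lhs => rw [← hainv, pa.central g⁻¹ (pa.act g⁻¹ a), mul_assoc]
  have hb' : pa.e g⁻¹ * (pa.e g⁻¹ * b) = pa.e g⁻¹ * b := by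
    rw [← mul_assoc, pa.idem]
  have hinv2 : pa.act g (pa.act g⁻¹ a) = a := by
    have := pa.inv_act g⁻¹ a (by rw [inv_inv]; exact ha)
    rwa [inv_inv] at this
  have hsplit : pa.act g (pa.act g⁻¹ a * (pa.e g⁻¹ * b)) =
      pa.act g (pa.act g⁻¹ a) * pa.act g (pa.e g⁻¹ * b) :=
    pa.act_mul g _ _ hainv hb'
  rw [hcp.mul g h a b ha hb, key, hsplit, hinv2, ← hcp.proj]


open MulOpposite in
theorem sum_indicator [Fintype G] (hcp : IsPartialSkewGroupRing pa A δ) (k : G) (c : R) :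
    ∑ g : G, δ g (if g = k then c else 0) = δ k c := by
  rw [Finset.sum_eq_single_of_mem k (Finset.mem_univ k)]
  · rw [if_pos rfl]
  · intro b _ hb
    rw [if_neg hb, delta_zero hcp]

theorem delta_one_mul (hcp : IsPartialSkewGroupRing pa A δ) (a b : R) :
    δ 1 a * δ 1 b = δ 1 (a * b) := by
  have h1 : ∀ r : R, pa.e (1 : G) * r = r := fun r => by rw [pa.e_one, one_mul]
  have := hcp.mul 1 1 a b (h1 a) (h1 b)
  rwa [inv_one, pa.act_one, pa.act_one, one_mul] at this

open MulOpposite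

variable (pa) (δ) in
/-- The carrier predicate for the induced right ideal `I·A`. -/
def QF [Fintype G] (I : Submodule Rᵐᵒᵖ Rᵐᵒᵖ) (y : A) : Prop :=
  ∃ a : G → R, (∀ g, op (a g) ∈ I ∧ pa.e g * a g = a g) ∧ y = ∑ g : G, δ g (a g)

theorem QF_zero [Fintype G] (hcp : IsPartialSkewGroupRing pa A δ)
    (I : Submodule Rᵐᵒᵖ Rᵐᵒᵖ) : QF pa δ I (0 : A) := by
  refine ⟨fun _ => 0, fun g => ⟨I.zero_mem, mul_zero _⟩, ?_⟩
  simp [delta_zero hcp]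

theorem QF_add [Fintype G] (hcp : IsPartialSkewGroupRing pa A δ)
    {I : Submodule Rᵐᵒᵖ Rᵐᵒᵖ} {y z : A} (hy : QF pa δ I y) (hz : QF pa δ I z) :
    QF pa δ I (y + z) := by
  obtain ⟨a, ha, rfl⟩ := hy
  obtain ⟨b, hb, rfl⟩ := hz
  refine ⟨fun g => a g + b g, fun g => ⟨I.add_mem (ha g).1 (hb g).1, ?_⟩, ?_⟩
  · rw [mul_add, (ha g).2, (hb g).2]
  · rw [← Finset.sum_add_distrib]
    exact Finset.sum_congr rfl fun g _ => (hcp.add g (a g) (b g)).symm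

theorem QF_single [Fintype G] (hcp : IsPartialSkewGroupRing pa A δ)
    {I : Submodule Rᵐᵒᵖ Rᵐᵒᵖ} {k : G} {c : R} (hc : op c ∈ I) (hck : pa.e k * c = c) :
    QF pa δ I (δ k c) := by
  refine ⟨fun g => if g = k then c else 0, fun g => ⟨?_, ?_⟩, (sum_indicator hcp k c).symm⟩
  · by_cases h : g = k <;> simp [h, hc, I.zero_mem]
  · by_cases h : g = k <;> simp [h, hck, mul_zero]

theorem QF_sum [Fintype G] (hcp : IsPartialSkewGroupRing pa A δ)
    {I : Submodule Rᵐᵒᵖ Rᵐᵒᵖ} {ι : Type} (s : Finset ι) (f : ι → A)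
    (h : ∀ i ∈ s, QF pa δ I (f i)) : QF pa δ I (∑ i ∈ s, f i) := by
  classical
  induction s using Finset.induction with
  | empty => simpa using QF_zero hcp I
  | insert _ _ hni ih =>
    rw [Finset.sum_insert hni]
    exact QF_add hcp (h _ (Finset.mem_insert_self _ _))
      (ih fun i hi => h i (Finset.mem_insert_of_mem hi))

theorem QF_mul_right [Fintype G] (hcp : IsPartialSkewGroupRing pa A δ)
    {I : Submodule Rᵐᵒᵖ Rᵐᵒᵖ} {y : A} (hy : QF pa δ I y) (z : A) :
    QF pa δ I (y * z) := by
  obtain ⟨a, ha, rfl⟩ := hy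
  obtain ⟨s, b, hb, rfl⟩ := hcp.span z
  rw [Finset.sum_mul_sum]
  refine QF_sum hcp _ _ fun g _ => QF_sum hcp _ _ fun h _ => ?_
  rw [mul_formula hcp g h (a g) (b h) (ha g).2 (hb h)]
  refine QF_single hcp ?_ ?_
  · -- op (e (g*h) * (a g * act g (e g⁻¹ * b h))) ∈ I
    rw [pa.central (g*h), mul_assoc]
    have : op (a g * (pa.act g (pa.e g⁻¹ * b h) * pa.e (g * h)))
        = op (pa.act g (pa.e g⁻¹ * b h) * pa.e (g * h)) * op (a g) := by
      rw [← op_mul]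
    rw [this]
    exact I.smul_mem _ (ha g).1
  · rw [← mul_assoc, pa.idem]

variable (pa) (δ) in
def skewF [Fintype G] (hcp : IsPartialSkewGroupRing pa A δ)
    (I : Submodule Rᵐᵒᵖ Rᵐᵒᵖ) : Submodule Aᵐᵒᵖ Aᵐᵒᵖ where
  carrier := {x | QF pa δ I x.unop}
  zero_mem' := by simpa using QF_zero hcp I
  add_mem' := by
    intro x y hx hy
    simpa [unop_add] using QF_add hcp hx hy
  smul_mem' := by
    intro c x hx
    show QF pa δ I ((c • x).unop)
    have : (c • x).unop = x.unop * c.unop := rfl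
    rw [this]
    exact QF_mul_right hcp hx c.unop

theorem skewF_mono [Fintype G] (hcp : IsPartialSkewGroupRing pa A δ)
    {I J : Submodule Rᵐᵒᵖ Rᵐᵒᵖ} (hIJ : I ≤ J) : skewF pa δ hcp I ≤ skewF pa δ hcp J := by
  rintro x ⟨a, ha, hx⟩
  exact ⟨a, fun g => ⟨hIJ (ha g).1, (ha g).2⟩, hx⟩

theorem skewF_refl [Fintype G] (hcp : IsPartialSkewGroupRing pa A δ)
    {I J : Submodule Rᵐᵒᵖ Rᵐᵒᵖ} (hIJ : I ≤ J)
    (h : skewF pa δ hcp J ≤ skewF pa δ hcp I) : J ≤ I := by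
  intro r hr
  have h1 : ∀ s : R, pa.e (1 : G) * s = s := fun s => by rw [pa.e_one, one_mul]
  have hmem : (op (δ 1 r.unop) : Aᵐᵒᵖ) ∈ skewF pa δ hcp J := by
    show QF pa δ J _
    rw [unop_op]
    refine ⟨fun g => if g = 1 then r.unop else 0, fun g => ⟨?_, ?_⟩,
      (sum_indicator hcp 1 r.unop).symm⟩
    · by_cases hg : g = 1 <;> simp [hg, J.zero_mem]
      · simpa using hr
    · by_cases hg : g = 1 <;> simp [hg, h1, mul_zero]
  obtain ⟨a, ha, hsum⟩ := h hmem
  rw [unop_op] at hsum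
  have hzero : ∑ g : G, δ g ((if g = 1 then r.unop else 0) - a g) = 0 := by
    have : ∀ g : G, δ g ((if g = 1 then r.unop else 0) - a g)
        = δ g (if g = 1 then r.unop else 0) - δ g (a g) := by
      intro g
      rw [sub_eq_add_neg, hcp.add, delta_neg hcp, ← sub_eq_add_neg]
    rw [Finset.sum_congr rfl fun g _ => this g, Finset.sum_sub_distrib,
      sum_indicator hcp, ← hsum, sub_self]
  have hb : ∀ g : G, pa.e g * ((if g = 1 then r.unop else 0) - a g)
      = (if g = 1 then r.unop else 0) - a g := by
    intro g
    rw [mul_sub, (ha g).2]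
    by_cases hg : g = 1 <;> simp [hg, h1, mul_zero]
  have := hcp.indep Finset.univ _ hb hzero 1 (Finset.mem_univ 1)
  rw [if_pos rfl, sub_eq_zero] at this
  have : r = op (a 1) := by rw [← this, op_unop]
  rw [this]
  exact (ha 1).1


variable (pa) (δ) in
/-- The filtration layer: sums supported on the first `i` group elements. -/
def Clayer [Fintype G] (i : ℕ) : Set A :=
  {x | ∃ a : G → R, (∀ g, pa.e g * a g = a g) ∧
    (∀ g, i ≤ ((Fintype.equivFin G) g : ℕ) → a g = 0) ∧ x = ∑ g : G, δ g (a g)}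

theorem C_zero [Fintype G] (hcp : IsPartialSkewGroupRing pa A δ) (i : ℕ) :
    (0 : A) ∈ Clayer pa δ i := by
  refine ⟨fun _ => 0, fun g => mul_zero _, fun g _ => rfl, ?_⟩
  simp [delta_zero hcp]

theorem C_add [Fintype G] (hcp : IsPartialSkewGroupRing pa A δ) {i : ℕ} {x y : A}
    (hx : x ∈ Clayer pa δ i) (hy : y ∈ Clayer pa δ i) : x + y ∈ Clayer pa δ i := by
  obtain ⟨a, ha, ha0, rfl⟩ := hx
  obtain ⟨b, hb, hb0, rfl⟩ := hy
  refine ⟨fun g => a g + b g, fun g => by rw [mul_add, ha g, hb g],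
    fun g hg => by simp [ha0 g hg, hb0 g hg], ?_⟩
  rw [← Finset.sum_add_distrib]
  exact Finset.sum_congr rfl fun g _ => (hcp.add g (a g) (b g)).symm

theorem C_neg [Fintype G] (hcp : IsPartialSkewGroupRing pa A δ) {i : ℕ} {x : A}
    (hx : x ∈ Clayer pa δ i) : -x ∈ Clayer pa δ i := by
  obtain ⟨a, ha, ha0, rfl⟩ := hx
  refine ⟨fun g => -(a g), fun g => by rw [mul_neg, ha g],
    fun g hg => by simp [ha0 g hg], ?_⟩
  rw [← Finset.sum_neg_distrib]
  exact Finset.sum_congr rfl fun g _ => (delta_neg hcp g (a g)).symm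

theorem C_sub [Fintype G] (hcp : IsPartialSkewGroupRing pa A δ) {i : ℕ} {x y : A}
    (hx : x ∈ Clayer pa δ i) (hy : y ∈ Clayer pa δ i) : x - y ∈ Clayer pa δ i := by
  rw [sub_eq_add_neg]
  exact C_add hcp hx (C_neg hcp hy)

theorem C_mul_delta_one [Fintype G] (hcp : IsPartialSkewGroupRing pa A δ) {i : ℕ} {x : A}
    (hx : x ∈ Clayer pa δ i) (s : R) : x * δ 1 s ∈ Clayer pa δ i := by
  obtain ⟨a, ha, ha0, rfl⟩ := hx
  have h1 : pa.e (1 : G) * s = s := by rw [pa.e_one, one_mul]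
  refine ⟨fun g => pa.e g * (a g * pa.act g (pa.e g⁻¹ * s)),
    fun g => by rw [← mul_assoc, pa.idem],
    fun g hg => by simp [ha0 g hg], ?_⟩
  rw [Finset.sum_mul]
  refine Finset.sum_congr rfl fun g _ => ?_
  rw [mul_formula hcp g 1 (a g) s (ha g) h1, mul_one]

theorem C_top [Fintype G] (hcp : IsPartialSkewGroupRing pa A δ) (x : A) :
    x ∈ Clayer pa δ (Fintype.card G) := by
  obtain ⟨s, a, ha, rfl⟩ := hcp.span x
  refine ⟨fun g => if g ∈ s then a g else 0, fun g => ?_, fun g hg => ?_, ?_⟩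
  · by_cases h : g ∈ s <;> simp [h, ha g, mul_zero]
  · exact absurd (Fintype.equivFin G g).2 (not_lt.mpr hg)
  · rw [← Finset.sum_subset (Finset.subset_univ s) ?h]
    · exact Finset.sum_congr rfl fun g hgs => by simp [hgs]
    · intro g _ hgs
      simp [hgs, delta_zero hcp]

theorem C_bot [Fintype G] (hcp : IsPartialSkewGroupRing pa A δ) {x : A}
    (hx : x ∈ Clayer pa δ 0) : x = 0 := by
  obtain ⟨a, _, ha0, rfl⟩ := hx
  have : ∀ g : G, a g = 0 := fun g => ha0 g (Nat.zero_le _)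
  simp [this, delta_zero hcp]

theorem C_decomp [Fintype G] (hcp : IsPartialSkewGroupRing pa A δ) {i : ℕ}
    (hi : i < Fintype.card G) {x : A} (hx : x ∈ Clayer pa δ (i + 1)) :
    ∃ c : R, pa.e ((Fintype.equivFin G).symm ⟨i, hi⟩) * c = c ∧
      x - δ ((Fintype.equivFin G).symm ⟨i, hi⟩) c ∈ Clayer pa δ i := by
  obtain ⟨a, ha, ha0, rfl⟩ := hx
  set k := (Fintype.equivFin G).symm ⟨i, hi⟩ with hk
  refine ⟨a k, ha k, fun g => if g = k then 0 else a g, fun g => ?_, fun g hg => ?_, ?_⟩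
  · by_cases h : g = k <;> simp [h, ha g, mul_zero]
  · show (if g = k then 0 else a g) = 0
    by_cases h : g = k
    · rw [if_pos h]
    · rw [if_neg h]
      refine ha0 g ?_
      rcases Nat.lt_or_ge ((Fintype.equivFin G) g : ℕ) (i + 1) with hlt | hge
      · exfalso
        have hne : ((Fintype.equivFin G) g : ℕ) ≠ i := by
          intro heq
          apply h
          have : (Fintype.equivFin G) g = ⟨i, hi⟩ := Fin.ext heq
          rw [hk, ← this, Equiv.symm_apply_apply]
        omega
      · exact hge
  · have hterm : ∀ g : G, δ g (a g) - δ g (if g = k then 0 else a g)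
        = if g = k then δ k (a k) else 0 := by
      intro g
      by_cases h : g = k
      · subst h
        rw [if_pos rfl, if_pos rfl, delta_zero hcp, sub_zero]
      · rw [if_neg h, if_neg h, sub_self]
    have : (∑ g : G, δ g (a g)) - (∑ g : G, δ g (if g = k then 0 else a g))
        = δ k (a k) := by
      rw [← Finset.sum_sub_distrib, Finset.sum_congr rfl fun g _ => hterm g,
        Finset.sum_ite_eq' Finset.univ k (fun _ => δ k (a k))]
      rw [if_pos (Finset.mem_univ k)]
    rw [sub_eq_iff_eq_add] at this
    rw [this]
    abel

theorem psi_surj (hcp : IsPartialSkewGroupRing pa A δ) (k : G) (c : R)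
    (hc : pa.e k * c = c) : ∃ r : R, δ k (pa.e k) * δ 1 r = δ k c := by
  obtain ⟨x₀, h1, _, h3⟩ := pa.act_range' k 1 c hc (by rw [mul_one]; exact hc)
  have he1 : pa.e (1 : G) * x₀ = x₀ := by rw [pa.e_one, one_mul]
  refine ⟨x₀, ?_⟩
  rw [mul_formula hcp k 1 (pa.e k) x₀ (pa.idem k) he1, mul_one, h1, h3,
    ← mul_assoc, pa.idem, ← hcp.proj]

variable (pa) (δ) in
def skewPhi [Fintype G] (hcp : IsPartialSkewGroupRing pa A δ)
    (S : Submodule Aᵐᵒᵖ Aᵐᵒᵖ) (i : Fin (Fintype.card G)) : Submodule Rᵐᵒᵖ Rᵐᵒᵖ where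
  carrier := {r | ∃ x : A, op x ∈ S ∧
    x - δ ((Fintype.equivFin G).symm i) (pa.e ((Fintype.equivFin G).symm i)) * δ 1 r.unop
      ∈ Clayer pa δ (i : ℕ)}
  zero_mem' := by
    refine ⟨0, by rw [op_zero]; exact S.zero_mem, ?_⟩
    rw [unop_zero, delta_zero hcp, mul_zero, sub_zero]
    exact C_zero hcp _
  add_mem' := by
    rintro r r' ⟨x, hxS, hx⟩ ⟨y, hyS, hy⟩
    refine ⟨x + y, by rw [op_add]; exact S.add_mem hxS hyS, ?_⟩
    rw [unop_add, hcp.add, mul_add, add_sub_add_comm]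
    exact C_add hcp hx hy
  smul_mem' := by
    rintro c r ⟨x, hxS, hx⟩
    refine ⟨x * δ 1 c.unop, ?_, ?_⟩
    · rw [op_mul]
      exact S.smul_mem (op (δ 1 c.unop)) hxS
    · have hunop : (c • r).unop = r.unop * c.unop := rfl
      rw [hunop, ← delta_one_mul hcp, ← mul_assoc, ← sub_mul]
      exact C_mul_delta_one hcp hx c.unop

theorem skewPhi_mono [Fintype G] (hcp : IsPartialSkewGroupRing pa A δ)
    {S T : Submodule Aᵐᵒᵖ Aᵐᵒᵖ} (hST : S ≤ T) (i : Fin (Fintype.card G)) :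
    skewPhi pa δ hcp S i ≤ skewPhi pa δ hcp T i := by
  rintro r ⟨x, hxS, hx⟩
  exact ⟨x, hST hxS, hx⟩

theorem skewPhi_refl [Fintype G] (hcp : IsPartialSkewGroupRing pa A δ)
    {S T : Submodule Aᵐᵒᵖ Aᵐᵒᵖ} (hST : S ≤ T)
    (h : ∀ i, skewPhi pa δ hcp T i ≤ skewPhi pa δ hcp S i) : T ≤ S := by
  have key : ∀ i : ℕ, i ≤ Fintype.card G → ∀ x : A,
      x ∈ Clayer pa δ i → op x ∈ T → op x ∈ S := by
    intro i
    induction i with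
    | zero =>
      intro _ x hx _
      rw [C_bot hcp hx, op_zero]
      exact S.zero_mem
    | succ i ih =>
      intro hi1 x hx hxT
      have hi : i < Fintype.card G := hi1
      set k := (Fintype.equivFin G).symm ⟨i, hi⟩ with hk
      obtain ⟨c, hc, hxc⟩ := C_decomp hcp hi hx
      obtain ⟨r, hr⟩ := psi_surj hcp k c hc
      have hrT : (op r : Rᵐᵒᵖ) ∈ skewPhi pa δ hcp T ⟨i, hi⟩ := by
        refine ⟨x, hxT, ?_⟩
        rw [unop_op, hr]
        exact hxc
      obtain ⟨y, hyS, hy⟩ := h ⟨i, hi⟩ hrT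
      rw [unop_op, hr] at hy
      have hxy : x - y ∈ Clayer pa δ i := by
        have : x - y = (x - δ k c) - (y - δ k c) := by abel
        rw [this]
        exact C_sub hcp hxc hy
      have hxyT : op (x - y) ∈ T := by
        rw [op_sub]
        exact T.sub_mem hxT (hST hyS)
      have hxyS := ih (Nat.le_of_succ_le hi1) (x - y) hxy hxyT
      have : op x = op (x - y) + op y := by rw [← op_add, sub_add_cancel]
      rw [this]
      exact S.add_mem hxyS hyS
  intro t ht
  have := key (Fintype.card G) le_rfl t.unop (C_top hcp t.unop) (by rw [op_unop]; exact ht)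
  rwa [op_unop] at this

end PSGR

/-- Let `α` be a partial action of a finite group `G` on a
unital ring `R`.  Then `R` has right Krull dimension if and only if `R*_α G`
does, in which case `Kdim(R) = Kdim(R*_α G)` (the same ordinals bound the two
deviations). -/
theorem partialSkewGroupRing_krullDim_eq_of_finite_group
    {G R : Type} [Group G] [Finite G] [Ring R]
    (pa : PartialAction G R)
    (A : Type) [Ring A] (δ : G → R → A)
    (hcp : IsPartialSkewGroupRing pa A δ) :
    (HasRightKrullDim R ↔ HasRightKrullDim A) ∧
    (∀ o : Ordinal.{0},
      DeviationLE o (Submodule Rᵐᵒᵖ Rᵐᵒᵖ) ↔ DeviationLE o (Submodule Aᵐᵒᵖ Aᵐᵒᵖ)) := by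
  classical
  haveI := Fintype.ofFinite G
  have dir1 : ∀ o : Ordinal.{0}, DeviationLE o (Submodule Rᵐᵒᵖ Rᵐᵒᵖ) →
      DeviationLE o (Submodule Aᵐᵒᵖ Aᵐᵒᵖ) := by
    intro o hR
    refine DeviationLE.transfer o (PSGR.skewPhi pa δ hcp) ?_ ?_ (DeviationLE.pi o fun _ => hR)
    · intro S T hST i
      exact PSGR.skewPhi_mono hcp hST i
    · intro S T hST h
      exact PSGR.skewPhi_refl hcp hST h
  have dir2 : ∀ o : Ordinal.{0}, DeviationLE o (Submodule Aᵐᵒᵖ Aᵐᵒᵖ) →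
      DeviationLE o (Submodule Rᵐᵒᵖ Rᵐᵒᵖ) := by
    intro o hA
    refine DeviationLE.transfer o (PSGR.skewF pa δ hcp) ?_ ?_ hA
    · intro I J hIJ
      exact PSGR.skewF_mono hcp hIJ
    · intro I J hIJ h
      exact PSGR.skewF_refl hcp hIJ h
  refine ⟨⟨fun ⟨o, h⟩ => ⟨o, dir1 o h⟩, fun ⟨o, h⟩ => ⟨o, dir2 o h⟩⟩, fun o => ⟨dir1 o, dir2 o⟩⟩
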